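/- Let H be a complex Hilbert space and A a bounded normal operator on H that is invertible in the algebra of bounded operators and whose spectrum contains no negative real number. Let I be a countable index set, let g : I → H be a Bessel family, and let L > 0. Then {A^t g_i : i ∈ I, t ∈ [0, L]} is a semi-continuous frame for H (there exist 0 < c ≤ C with c‖f‖² ≤ ∑_{i∈I} ∫₀ᴸ |⟨f, A^t g_i⟩|² dt ≤ C‖f‖² for all f ∈ H) if and only if there exist n ≥ 1 and real numbers 0 = t₁ < t₂ < ⋯ < t_n < L such that the discrete system {A^{t_k} g_i : 1 ≤ k ≤ n, i ∈ I} is a frame for H (there exist 0 < c' ≤ C' with c'‖f‖² ≤ ∑_{i∈I} ∑_{k=1}^n |⟨f, A^{t_k} g_i⟩|² ≤ C'‖f‖² for all f ∈ H). -/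

import Mathlib

open scoped InnerProductSpace
open Set MeasureTheory

set_option linter.unusedSectionVars false
namespace SemicontFrameAux

lemma summable_mul_of_sq {I : Type*} {x y : I → ℝ} (hx : ∀ i, 0 ≤ x i) (hy : ∀ i, 0 ≤ y i)
    (hx2 : Summable fun i => x i ^ 2) (hy2 : Summable fun i => y i ^ 2) :
    Summable fun i => x i * y i := by
  refine Summable.of_nonneg_of_le (fun i => mul_nonneg (hx i) (hy i)) (fun i => ?_)
    ((hx2.add hy2).mul_left (1/2 : ℝ))
  nlinarith [sq_nonneg (x i - y i)]

lemma tsum_cs {I : Type*} {x y : I → ℝ} (hx : ∀ i, 0 ≤ x i) (hy : ∀ i, 0 ≤ y i)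
    (hx2 : Summable fun i => x i ^ 2) (hy2 : Summable fun i => y i ^ 2) :
    ∑' i, x i * y i ≤ Real.sqrt ((∑' i, x i ^ 2) * (∑' i, y i ^ 2)) := by
  refine Summable.tsum_le_of_sum_le (summable_mul_of_sq hx hy hx2 hy2) fun F => ?_
  calc ∑ i ∈ F, x i * y i
      ≤ Real.sqrt (∑ i ∈ F, x i ^ 2) * Real.sqrt (∑ i ∈ F, y i ^ 2) :=
        Real.sum_mul_le_sqrt_mul_sqrt F x y
    _ ≤ Real.sqrt (∑' i, x i ^ 2) * Real.sqrt (∑' i, y i ^ 2) := by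
        gcongr <;>
          first
            | exact Summable.sum_le_tsum F (fun i _ => sq_nonneg _) hx2
            | exact Summable.sum_le_tsum F (fun i _ => sq_nonneg _) hy2
    _ = Real.sqrt ((∑' i, x i ^ 2) * (∑' i, y i ^ 2)) :=
        (Real.sqrt_mul (tsum_nonneg fun i => sq_nonneg _) _).symm

variable {H : Type*} [NormedAddCommGroup H] [InnerProductSpace ℂ H] [CompleteSpace H]
variable {I : Type*} {g : I → H} {CB : ℝ}

lemma inner_adj (B : H →L[ℂ] H) (f x : H) :
    ⟪f, B x⟫_ℂ = ⟪(ContinuousLinearMap.adjoint B) f, x⟫_ℂ :=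
  (ContinuousLinearMap.adjoint_inner_left B x f).symm

lemma summable_inner_op (hG : ∀ h : H, Summable fun i => ‖⟪h, g i⟫_ℂ‖ ^ 2)
    (B : H →L[ℂ] H) (f : H) : Summable fun i => ‖⟪f, B (g i)⟫_ℂ‖ ^ 2 := by
  have := hG ((ContinuousLinearMap.adjoint B) f)
  simpa only [← inner_adj] using this

lemma norm_adjoint_apply_le (B : H →L[ℂ] H) (f : H) :
    ‖(ContinuousLinearMap.adjoint B) f‖ ≤ ‖B‖ * ‖f‖ := by
  calc ‖(ContinuousLinearMap.adjoint B) f‖ ≤ ‖ContinuousLinearMap.adjoint B‖ * ‖f‖ :=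
        (ContinuousLinearMap.adjoint B).le_opNorm f
  _ = ‖B‖ * ‖f‖ := by rw [LinearIsometryEquiv.norm_map]

lemma tsum_inner_op_le (hCB : ∀ h : H, ∑' i, ‖⟪h, g i⟫_ℂ‖ ^ 2 ≤ CB * ‖h‖ ^ 2)
    (hCB0 : 0 ≤ CB) (B : H →L[ℂ] H) (f : H) :
    ∑' i, ‖⟪f, B (g i)⟫_ℂ‖ ^ 2 ≤ CB * (‖B‖ * ‖f‖) ^ 2 := by
  calc ∑' i, ‖⟪f, B (g i)⟫_ℂ‖ ^ 2
      = ∑' i, ‖⟪(ContinuousLinearMap.adjoint B) f, g i⟫_ℂ‖ ^ 2 := by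
        simp only [inner_adj]
    _ ≤ CB * ‖(ContinuousLinearMap.adjoint B) f‖ ^ 2 := hCB _
    _ ≤ CB * (‖B‖ * ‖f‖) ^ 2 :=
        mul_le_mul_of_nonneg_left
          (pow_le_pow_left₀ (norm_nonneg _) (norm_adjoint_apply_le B f) 2) hCB0


lemma phi_diff (hG : ∀ h : H, Summable fun i => ‖⟪h, g i⟫_ℂ‖ ^ 2)
    (hCB : ∀ h : H, ∑' i, ‖⟪h, g i⟫_ℂ‖ ^ 2 ≤ CB * ‖h‖ ^ 2) (hCB0 : 0 ≤ CB)
    {B C : H →L[ℂ] H} {Mb : ℝ} (hB : ‖B‖ ≤ Mb) (hC : ‖C‖ ≤ Mb) (f : H) :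
    |(∑' i, ‖⟪f, B (g i)⟫_ℂ‖ ^ 2) - ∑' i, ‖⟪f, C (g i)⟫_ℂ‖ ^ 2|
      ≤ 2 * CB * Mb * ‖B - C‖ * ‖f‖ ^ 2 := by
  have hMb0 : 0 ≤ Mb := le_trans (norm_nonneg _) hB
  set a : I → ℂ := fun i => ⟪f, B (g i)⟫_ℂ with ha
  set b : I → ℂ := fun i => ⟪f, C (g i)⟫_ℂ with hb
  have hsa : Summable fun i => ‖a i‖ ^ 2 := summable_inner_op hG B f
  have hsb : Summable fun i => ‖b i‖ ^ 2 := summable_inner_op hG C f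
  have habd : ∀ i, a i - b i = ⟪f, (B - C) (g i)⟫_ℂ := by
    intro i
    simp [ha, hb, ← inner_sub_right]
  have hsd : Summable fun i => ‖a i - b i‖ ^ 2 := by
    simp only [habd]; exact summable_inner_op hG (B - C) f
  -- pointwise bound
  have hpt : ∀ i, |‖a i‖ ^ 2 - ‖b i‖ ^ 2| ≤ ‖a i - b i‖ * (‖a i‖ + ‖b i‖) := by
    intro i
    have h1 : |‖a i‖ - ‖b i‖| ≤ ‖a i - b i‖ := abs_norm_sub_norm_le _ _
    have : |‖a i‖ ^ 2 - ‖b i‖ ^ 2| = |‖a i‖ - ‖b i‖| * (‖a i‖ + ‖b i‖) := by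
      rw [show ‖a i‖ ^ 2 - ‖b i‖ ^ 2 = (‖a i‖ - ‖b i‖) * (‖a i‖ + ‖b i‖) by ring,
        abs_mul, abs_of_nonneg (show (0:ℝ) ≤ ‖a i‖ + ‖b i‖ by positivity)]
    rw [this]
    exact mul_le_mul_of_nonneg_right h1 (by positivity)
  have hsum_y2 : Summable fun i => (‖a i‖ + ‖b i‖) ^ 2 := by
    refine Summable.of_nonneg_of_le (fun i => sq_nonneg _) (fun i => ?_)
      (((hsa.add hsb)).mul_left 2)
    nlinarith [sq_nonneg (‖a i‖ - ‖b i‖)]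
  have hsxy : Summable fun i => ‖a i - b i‖ * (‖a i‖ + ‖b i‖) :=
    summable_mul_of_sq (fun i => norm_nonneg _) (fun i => by positivity) hsd hsum_y2
  have hdiff : (∑' i, ‖a i‖ ^ 2) - ∑' i, ‖b i‖ ^ 2 = ∑' i, (‖a i‖ ^ 2 - ‖b i‖ ^ 2) :=
    (Summable.tsum_sub hsa hsb).symm
  rw [hdiff]
  have habs : |∑' i, (‖a i‖ ^ 2 - ‖b i‖ ^ 2)| ≤ ∑' i, |‖a i‖ ^ 2 - ‖b i‖ ^ 2| := by
    simpa using norm_tsum_le_tsum_norm (f := fun i => ‖a i‖ ^ 2 - ‖b i‖ ^ 2)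
      (by simpa using (hsa.sub hsb).abs)
  refine le_trans habs (le_trans (Summable.tsum_le_tsum hpt ?_ hsxy) ?_)
  · exact (hsa.sub hsb).abs
  refine le_trans (tsum_cs (fun i => norm_nonneg _) (fun i => by positivity) hsd hsum_y2) ?_
  have h1 : ∑' i, ‖a i - b i‖ ^ 2 ≤ CB * (‖B - C‖ * ‖f‖) ^ 2 := by
    simp only [habd]; exact tsum_inner_op_le hCB hCB0 (B - C) f
  have h2 : ∑' i, (‖a i‖ + ‖b i‖) ^ 2 ≤ 4 * (CB * (Mb * ‖f‖) ^ 2) := by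
    have ha' : ∑' i, ‖a i‖ ^ 2 ≤ CB * (Mb * ‖f‖) ^ 2 :=
      le_trans (tsum_inner_op_le hCB hCB0 B f) (by
        have : CB * (‖B‖ * ‖f‖) ^ 2 ≤ CB * (Mb * ‖f‖) ^ 2 := by
          apply mul_le_mul_of_nonneg_left _ hCB0
          apply pow_le_pow_left₀ (by positivity)
          exact mul_le_mul_of_nonneg_right hB (norm_nonneg _)
        exact this)
    have hb' : ∑' i, ‖b i‖ ^ 2 ≤ CB * (Mb * ‖f‖) ^ 2 :=
      le_trans (tsum_inner_op_le hCB hCB0 C f) (by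
        have : CB * (‖C‖ * ‖f‖) ^ 2 ≤ CB * (Mb * ‖f‖) ^ 2 := by
          apply mul_le_mul_of_nonneg_left _ hCB0
          apply pow_le_pow_left₀ (by positivity)
          exact mul_le_mul_of_nonneg_right hC (norm_nonneg _)
        exact this)
    have hpt2 : ∀ i, (‖a i‖ + ‖b i‖) ^ 2 ≤ 2 * (‖a i‖ ^ 2 + ‖b i‖ ^ 2) := by
      intro i; nlinarith [sq_nonneg (‖a i‖ - ‖b i‖)]
    calc ∑' i, (‖a i‖ + ‖b i‖) ^ 2 ≤ ∑' i, 2 * (‖a i‖ ^ 2 + ‖b i‖ ^ 2) :=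
          Summable.tsum_le_tsum hpt2 hsum_y2 ((hsa.add hsb).mul_left 2)
      _ = 2 * ((∑' i, ‖a i‖ ^ 2) + ∑' i, ‖b i‖ ^ 2) := by
          rw [tsum_mul_left, Summable.tsum_add hsa hsb]
      _ ≤ 4 * (CB * (Mb * ‖f‖) ^ 2) := by nlinarith
  have hR : Real.sqrt ((∑' i, ‖a i - b i‖ ^ 2) * ∑' i, (‖a i‖ + ‖b i‖) ^ 2)
      ≤ Real.sqrt ((CB * (‖B - C‖ * ‖f‖) ^ 2) * (4 * (CB * (Mb * ‖f‖) ^ 2))) := by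
    apply Real.sqrt_le_sqrt
    have hnn1 : (0:ℝ) ≤ ∑' i, ‖a i - b i‖ ^ 2 := tsum_nonneg fun i => sq_nonneg _
    have hnn2 : (0:ℝ) ≤ ∑' i, (‖a i‖ + ‖b i‖) ^ 2 := tsum_nonneg fun i => sq_nonneg _
    exact mul_le_mul h1 h2 hnn2 (by positivity)
  refine le_trans hR ?_
  have : (CB * (‖B - C‖ * ‖f‖) ^ 2) * (4 * (CB * (Mb * ‖f‖) ^ 2))
      = (2 * CB * Mb * ‖B - C‖ * ‖f‖ ^ 2) ^ 2 := by ring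
  rw [this, Real.sqrt_sq (by positivity)]


section Tlayer

variable {T : ℝ → (H →L[ℂ] H)} {L : ℝ}

lemma psi_contOn (hTc : ContinuousOn T (Icc 0 L)) (f : H) (i : I) :
    ContinuousOn (fun s => ‖⟪f, T s (g i)⟫_ℂ‖ ^ 2) (Icc 0 L) := by
  have h1 : ContinuousOn (fun s => (T s) (g i)) (Icc 0 L) := hTc.clm_apply continuousOn_const
  have h2 : ContinuousOn (fun s => ⟪f, (T s) (g i)⟫_ℂ) (Icc 0 L) :=
    ContinuousOn.inner continuousOn_const h1
  exact h2.norm.pow 2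

lemma Psi_contOn (hG : ∀ h : H, Summable fun i => ‖⟪h, g i⟫_ℂ‖ ^ 2)
    (hCB : ∀ h : H, ∑' i, ‖⟪h, g i⟫_ℂ‖ ^ 2 ≤ CB * ‖h‖ ^ 2) (hCB0 : 0 ≤ CB)
    {Mb : ℝ} (hMb0 : 0 ≤ Mb) (hMb : ∀ t ∈ Icc 0 L, ‖T t‖ ≤ Mb)
    (hTc : ContinuousOn T (Icc 0 L)) (f : H) :
    ContinuousOn (fun s => ∑' i, ‖⟪f, T s (g i)⟫_ℂ‖ ^ 2) (Icc 0 L) := by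
  intro t0 ht0
  rw [Metric.continuousWithinAt_iff]
  intro ε hε
  set K : ℝ := 2 * CB * Mb * ‖f‖ ^ 2 + 1 with hKdef
  have hK : 0 < K := by positivity
  obtain ⟨δ, hδ, hd⟩ := Metric.continuousWithinAt_iff.mp (hTc t0 ht0) (ε / K) (by positivity)
  refine ⟨δ, hδ, fun {s} hs hds => ?_⟩
  have hb := phi_diff hG hCB hCB0 (hMb s hs) (hMb t0 ht0) f
  have hTd : ‖T s - T t0‖ < ε / K := by
    rw [← dist_eq_norm]; exact hd hs hds
  rw [Real.dist_eq]
  have h1 : 2 * CB * Mb * ‖T s - T t0‖ * ‖f‖ ^ 2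
      ≤ (K - 1) * (ε / K) := by
    have h2 : (0:ℝ) ≤ 2 * CB * Mb * ‖f‖ ^ 2 := by positivity
    have := mul_le_mul_of_nonneg_left hTd.le h2
    calc 2 * CB * Mb * ‖T s - T t0‖ * ‖f‖ ^ 2
        = (2 * CB * Mb * ‖f‖ ^ 2) * ‖T s - T t0‖ := by ring
      _ ≤ (2 * CB * Mb * ‖f‖ ^ 2) * (ε / K) := this
      _ = (K - 1) * (ε / K) := by rw [hKdef]; ring
  have h3 : (K - 1) * (ε / K) < ε := by
    rw [div_eq_inv_mul]
    have : (K - 1) * (K⁻¹ * ε) = (K - 1) / K * ε := by ring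
    rw [this]
    have h4 : (K - 1) / K < 1 := by
      rw [div_lt_one hK]; linarith
    nlinarith
  exact lt_of_le_of_lt (le_trans hb h1) h3

lemma psi_intervalIntegrable (hTc : ContinuousOn T (Icc 0 L)) (hL : 0 ≤ L) (f : H) (i : I)
    {a b : ℝ} (hab : a ∈ Icc 0 L) (hbb : b ∈ Icc 0 L) :
    IntervalIntegrable (fun s => ‖⟪f, T s (g i)⟫_ℂ‖ ^ 2) MeasureTheory.volume a b := by
  apply ContinuousOn.intervalIntegrable
  apply (psi_contOn hTc f i).mono
  rw [← uIcc_of_le hL] at hab hbb ⊢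
  exact uIcc_subset_uIcc hab hbb

lemma Psi_intervalIntegrable (hG : ∀ h : H, Summable fun i => ‖⟪h, g i⟫_ℂ‖ ^ 2)
    (hCB : ∀ h : H, ∑' i, ‖⟪h, g i⟫_ℂ‖ ^ 2 ≤ CB * ‖h‖ ^ 2) (hCB0 : 0 ≤ CB)
    {Mb : ℝ} (hMb0 : 0 ≤ Mb) (hMb : ∀ t ∈ Icc 0 L, ‖T t‖ ≤ Mb)
    (hTc : ContinuousOn T (Icc 0 L)) (hL : 0 ≤ L) (f : H)
    {a b : ℝ} (hab : a ∈ Icc 0 L) (hbb : b ∈ Icc 0 L) :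
    IntervalIntegrable (fun s => ∑' i, ‖⟪f, T s (g i)⟫_ℂ‖ ^ 2) MeasureTheory.volume a b := by
  apply ContinuousOn.intervalIntegrable
  apply (Psi_contOn hG hCB hCB0 hMb0 hMb hTc f).mono
  rw [← uIcc_of_le hL] at hab hbb ⊢
  exact uIcc_subset_uIcc hab hbb


lemma swap_lemma [Countable I] (hG : ∀ h : H, Summable fun i => ‖⟪h, g i⟫_ℂ‖ ^ 2)
    (hCB : ∀ h : H, ∑' i, ‖⟪h, g i⟫_ℂ‖ ^ 2 ≤ CB * ‖h‖ ^ 2) (hCB0 : 0 ≤ CB)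
    {Mb : ℝ} (hMb0 : 0 ≤ Mb) (hMb : ∀ t ∈ Icc 0 L, ‖T t‖ ≤ Mb)
    (hTc : ContinuousOn T (Icc 0 L)) (hL : 0 ≤ L) (f : H) :
    Summable (fun i => ∫ t in (0:ℝ)..L, ‖⟪f, T t (g i)⟫_ℂ‖ ^ 2)
    ∧ ∑' i, ∫ t in (0:ℝ)..L, ‖⟪f, T t (g i)⟫_ℂ‖ ^ 2
        = ∫ t in (0:ℝ)..L, ∑' i, ‖⟪f, T t (g i)⟫_ℂ‖ ^ 2 := by
  set ψ : I → ℝ → ℝ := fun i s => ‖⟪f, T s (g i)⟫_ℂ‖ ^ 2 with hψ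
  set μ : Measure ℝ := MeasureTheory.volume.restrict (Ioc 0 L) with hμ
  have hmeas : ∀ i, AEStronglyMeasurable (ψ i) μ := fun i =>
    ((psi_contOn hTc f i).mono Ioc_subset_Icc_self).aestronglyMeasurable measurableSet_Ioc
  have hptnn : ∀ i t, 0 ≤ ψ i t := fun i t => sq_nonneg _
  have hpt : ∀ t ∈ Ioc (0:ℝ) L,
      (∑' i, (‖ψ i t‖₊ : ENNReal)) ≤ ENNReal.ofReal (CB * (Mb * ‖f‖) ^ 2) := by
    intro t ht
    have hsum := summable_inner_op hG (T t) f
    have h1 : (∑' i, (‖ψ i t‖₊ : ENNReal)) = ENNReal.ofReal (∑' i, ψ i t) := by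
      rw [ENNReal.ofReal_tsum_of_nonneg (fun i => hptnn i t) hsum]
      exact tsum_congr fun i => (Real.enorm_eq_ofReal (hptnn i t))
    rw [h1]
    apply ENNReal.ofReal_le_ofReal
    exact le_trans (tsum_inner_op_le hCB hCB0 (T t) f)
      (by
        have hTt : ‖T t‖ ≤ Mb := hMb t (Ioc_subset_Icc_self ht)
        apply mul_le_mul_of_nonneg_left _ hCB0
        apply pow_le_pow_left₀ (by positivity)
        exact mul_le_mul_of_nonneg_right hTt (norm_nonneg _))
  have hfin : (∑' i, ∫⁻ t, ‖ψ i t‖₊ ∂μ) ≠ ⊤ := by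
    rw [← MeasureTheory.lintegral_tsum (fun i => (hmeas i).aemeasurable.nnnorm.coe_nnreal_ennreal)]
    have hb : (∫⁻ t, (∑' i, (‖ψ i t‖₊ : ENNReal)) ∂μ)
        ≤ ∫⁻ _, ENNReal.ofReal (CB * (Mb * ‖f‖) ^ 2) ∂μ := by
      apply MeasureTheory.lintegral_mono_ae
      filter_upwards [MeasureTheory.ae_restrict_mem measurableSet_Ioc] with t ht
      exact hpt t ht
    refine ne_top_of_le_ne_top ?_ hb
    rw [MeasureTheory.lintegral_const]
    apply ENNReal.mul_ne_top ENNReal.ofReal_ne_top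
    simp [hμ, Measure.restrict_apply_univ]
  have hswap := MeasureTheory.integral_tsum hmeas hfin
  have hieq : ∀ i, (∫ t in (0:ℝ)..L, ψ i t) = ∫ t, ψ i t ∂μ := fun i =>
    intervalIntegral.integral_of_le hL
  have hieq2 : (∫ t in (0:ℝ)..L, ∑' i, ψ i t) = ∫ t, (∑' i, ψ i t) ∂μ :=
    intervalIntegral.integral_of_le hL
  have hsummable : Summable fun i => ∫ t in (0:ℝ)..L, ψ i t := by
    have h0 := ENNReal.summable_toReal hfin
    apply Summable.congr h0
    intro i
    rw [hieq i]
    rw [MeasureTheory.integral_eq_lintegral_of_nonneg_ae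
      (Filter.Eventually.of_forall (fun t => hptnn i t)) (hmeas i)]
    congr 1
    apply lintegral_congr
    intro t
    exact Real.enorm_eq_ofReal (hptnn i t)
  constructor
  · exact hsummable
  · rw [hieq2, hswap]
    exact tsum_congr fun i => (hieq i)


lemma hsum_of_discrete (hT0 : T 0 = 1) {n : ℕ} {t : ℕ → ℝ} (hn : 1 ≤ n)
    (ht0 : t 0 = 0) {c' : ℝ} (hc' : 0 < c')
    (hlow : ∀ f : H, c' * ‖f‖ ^ 2 ≤ ∑' i, ∑ k ∈ Finset.range n, ‖⟪f, T (t k) (g i)⟫_ℂ‖ ^ 2) :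
    ∀ h : H, Summable fun i => ‖⟪h, g i⟫_ℂ‖ ^ 2 := by
  intro h
  rcases eq_or_ne h 0 with rfl | hne
  · apply summable_of_sum_le (c := 0) (fun i => sq_nonneg _)
    intro F
    simp
  have hS : Summable fun i => ∑ k ∈ Finset.range n, ‖⟪h, T (t k) (g i)⟫_ℂ‖ ^ 2 := by
    by_contra hns
    have h0 := hlow h
    rw [tsum_eq_zero_of_not_summable hns] at h0
    have hpos : 0 < c' * ‖h‖ ^ 2 := by
      have : 0 < ‖h‖ := norm_pos_iff.mpr hne
      positivity
    linarith
  have h1 : Summable fun i => ‖⟪h, T (t 0) (g i)⟫_ℂ‖ ^ 2 :=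
    Summable.of_nonneg_of_le (fun i => sq_nonneg _)
      (fun i => Finset.single_le_sum (f := fun k => ‖⟪h, T (t k) (g i)⟫_ℂ‖ ^ 2)
        (fun k _ => sq_nonneg _) (Finset.mem_range.mpr hn)) hS
  simpa [ht0, hT0] using h1

lemma hsum_of_continuous [Countable I]
    (hCB : ∀ h : H, ∑' i, ‖⟪h, g i⟫_ℂ‖ ^ 2 ≤ CB * ‖h‖ ^ 2) (hCB0 : 0 ≤ CB)
    {Mb : ℝ} (hMb0 : 0 ≤ Mb) (hMb : ∀ t ∈ Icc 0 L, ‖T t‖ ≤ Mb) (hT0 : T 0 = 1)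
    (hTc : ContinuousOn T (Icc 0 L)) (hL : 0 < L)
    {c : ℝ} (hc : 0 < c)
    (hlow : ∀ f : H, c * ‖f‖ ^ 2 ≤ ∑' i, ∫ s in (0:ℝ)..L, ‖⟪f, T s (g i)⟫_ℂ‖ ^ 2) :
    ∀ h : H, Summable fun i => ‖⟪h, g i⟫_ℂ‖ ^ 2 := by
  intro h
  rcases eq_or_ne h 0 with rfl | hne
  · apply summable_of_sum_le (c := 0) (fun i => sq_nonneg _)
    intro F
    simp
  set ψ : I → ℝ → ℝ := fun i s => ‖⟪h, T s (g i)⟫_ℂ‖ ^ 2 with hψ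
  have hptnn : ∀ i s, 0 ≤ ψ i s := fun i s => sq_nonneg _
  have hS1 : Summable fun i => ∫ s in (0:ℝ)..L, ψ i s := by
    by_contra hns
    have h0 := hlow h
    rw [tsum_eq_zero_of_not_summable hns] at h0
    have hpos : 0 < c * ‖h‖ ^ 2 := by
      have : 0 < ‖h‖ := norm_pos_iff.mpr hne
      positivity
    linarith
  set μ : Measure ℝ := MeasureTheory.volume.restrict (Ioc 0 L) with hμ
  have hmeas : ∀ i, AEStronglyMeasurable (ψ i) μ := fun i =>
    ((psi_contOn hTc h i).mono Ioc_subset_Icc_self).aestronglyMeasurable measurableSet_Ioc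
  have hInt : ∀ i, MeasureTheory.IntegrableOn (ψ i) (Ioc 0 L) := fun i =>
    ((psi_contOn hTc h i).integrableOn_Icc).mono_set Ioc_subset_Icc_self
  have hS1' : Summable fun i => ∫ s, ψ i s ∂μ := by
    apply hS1.congr
    intro i
    exact intervalIntegral.integral_of_le hL.le
  have hlfin : (∫⁻ s, (∑' i, (‖ψ i s‖₊ : ENNReal)) ∂μ) ≠ ⊤ := by
    rw [MeasureTheory.lintegral_tsum (fun i => (hmeas i).aemeasurable.nnnorm.coe_nnreal_ennreal)]
    have heq : ∀ i, (∫⁻ s, (‖ψ i s‖₊ : ENNReal) ∂μ) = ENNReal.ofReal (∫ s, ψ i s ∂μ) := by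
      intro i
      rw [MeasureTheory.ofReal_integral_eq_lintegral_ofReal (hInt i)
        (Filter.Eventually.of_forall (fun s => hptnn i s))]
      apply lintegral_congr
      intro s
      exact Real.enorm_eq_ofReal (hptnn i s)
    rw [tsum_congr heq, ← ENNReal.ofReal_tsum_of_nonneg
      (fun i => MeasureTheory.integral_nonneg (fun s => hptnn i s)) hS1']
    exact ENNReal.ofReal_ne_top
  have haemeas : AEMeasurable (fun s => ∑' i, (‖ψ i s‖₊ : ENNReal)) μ :=
    AEMeasurable.ennreal_tsum (fun i => (hmeas i).aemeasurable.nnnorm.coe_nnreal_ennreal)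
  have hae : ∀ᵐ s ∂μ, (∑' i, (‖ψ i s‖₊ : ENNReal)) < ⊤ :=
    MeasureTheory.ae_lt_top' haemeas hlfin
  have hae2 : ∀ᵐ s ∂μ, Summable fun i => ψ i s := by
    filter_upwards [hae] with s hs
    have h1 : Summable fun i => ‖ψ i s‖₊ :=
      ENNReal.tsum_coe_ne_top_iff_summable.mp hs.ne
    have h2 : Summable fun i => (‖ψ i s‖₊ : ℝ) := NNReal.summable_coe.mpr h1
    apply h2.congr
    intro i
    simp [Real.norm_of_nonneg (hptnn i s)]
  have hseq : ∀ m : ℕ, ∃ s, (s ∈ Ioc (0:ℝ) L ∧ s ≤ 1 / ((m:ℝ)+1))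
      ∧ Summable fun i => ψ i s := by
    intro m
    by_contra hcon
    push_neg at hcon
    set ε : ℝ := min L (1/((m:ℝ)+1)) with hεdef
    have hε : 0 < ε := lt_min hL (by positivity)
    have hsub : Ioc (0:ℝ) ε ⊆ {s | ¬ Summable fun i => ψ i s} ∩ Ioc 0 L := by
      intro s hs
      have hs1 : s ∈ Ioc (0:ℝ) L := ⟨hs.1, le_trans hs.2 (min_le_left _ _)⟩
      refine ⟨?_, hs1⟩
      exact hcon s ⟨hs1, le_trans hs.2 (min_le_right _ _)⟩
    have h0 : μ {s | ¬ Summable fun i => ψ i s} = 0 := by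
      rw [← MeasureTheory.ae_iff]
      exact hae2
    have h1 : MeasureTheory.volume (Ioc (0:ℝ) ε) = 0 := by
      apply measure_mono_null hsub
      rw [← Measure.restrict_apply' measurableSet_Ioc]
      exact h0
    rw [Real.volume_Ioc] at h1
    simp only [ENNReal.ofReal_eq_zero] at h1
    linarith
  choose u hu husum using hseq
  have hTmem : ∀ m, u m ∈ Icc 0 L := fun m => Ioc_subset_Icc_self (hu m).1
  have hulim : Filter.Tendsto u Filter.atTop (nhds 0) := by
    apply tendsto_of_tendsto_of_tendsto_of_le_of_le tendsto_const_nhds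
      tendsto_one_div_add_atTop_nhds_zero_nat
      (fun m => (hu m).1.1.le) (fun m => (hu m).2)
  have hbound : ∀ m (F : Finset I), ∑ i ∈ F, ψ i (u m) ≤ CB * (Mb * ‖h‖) ^ 2 := by
    intro m F
    refine le_trans (Summable.sum_le_tsum F (fun i _ => hptnn i (u m)) (husum m)) ?_
    refine le_trans (tsum_inner_op_le hCB hCB0 (T (u m)) h) ?_
    apply mul_le_mul_of_nonneg_left _ hCB0
    apply pow_le_pow_left₀ (by positivity)
    exact mul_le_mul_of_nonneg_right (hMb (u m) (hTmem m)) (norm_nonneg _)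
  have hF : ∀ F : Finset I, ∑ i ∈ F, ψ i 0 ≤ CB * (Mb * ‖h‖) ^ 2 := by
    intro F
    have htend : Filter.Tendsto (fun m => ∑ i ∈ F, ψ i (u m)) Filter.atTop
        (nhds (∑ i ∈ F, ψ i 0)) := by
      apply tendsto_finset_sum
      intro i _
      have hcw : ContinuousWithinAt (ψ i) (Icc 0 L) 0 :=
        (psi_contOn hTc h i) 0 ⟨le_refl 0, hL.le⟩
      exact hcw.tendsto.comp
        (tendsto_nhdsWithin_iff.mpr ⟨hulim, Filter.Eventually.of_forall hTmem⟩)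
    exact le_of_tendsto htend (Filter.Eventually.of_forall fun m => hbound m F)
  have hsum0 : Summable fun i => ψ i 0 := summable_of_sum_le (fun i => hptnn i 0) hF
  simpa [hψ, hT0] using hsum0


lemma continuous_of_discrete [Countable I]
    (hG : ∀ h : H, Summable fun i => ‖⟪h, g i⟫_ℂ‖ ^ 2)
    (hCB : ∀ h : H, ∑' i, ‖⟪h, g i⟫_ℂ‖ ^ 2 ≤ CB * ‖h‖ ^ 2) (hCB0 : 0 ≤ CB)
    {Mb : ℝ} (hMb0 : 0 ≤ Mb) (hMb : ∀ s ∈ Icc 0 L, ‖T s‖ ≤ Mb)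
    (hTc : ContinuousOn T (Icc 0 L))
    (hmod : ∀ ε > (0:ℝ), ∃ δ > (0:ℝ), ∀ s ∈ Icc 0 L, ∀ u ∈ Icc 0 L,
      |s - u| ≤ δ → ‖T s - T u‖ ≤ ε)
    (hL : 0 < L) {n : ℕ} {t : ℕ → ℝ} (hn : 1 ≤ n) (ht0 : t 0 = 0)
    (hmono : ∀ k, k + 1 < n → t k < t (k + 1)) (htn : t (n - 1) < L)
    {c' : ℝ} (hc' : 0 < c')
    (hlow : ∀ f : H, c' * ‖f‖ ^ 2
      ≤ ∑' i, ∑ k ∈ Finset.range n, ‖⟪f, T (t k) (g i)⟫_ℂ‖ ^ 2) :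
    ∃ c C : ℝ, 0 < c ∧ c ≤ C ∧ ∀ f : H,
      c * ‖f‖ ^ 2 ≤ (∑' i, ∫ s in (0:ℝ)..L, ‖⟪f, T s (g i)⟫_ℂ‖ ^ 2) ∧
      (∑' i, ∫ s in (0:ℝ)..L, ‖⟪f, T s (g i)⟫_ℂ‖ ^ 2) ≤ C * ‖f‖ ^ 2 := by
  -- monotonicity facts
  have hstep : ∀ d k, k + d < n → t k ≤ t (k + d) := by
    intro d
    induction d with
    | zero => intro k _; simp
    | succ d ih =>
      intro k hk
      have h1 : k + d < n := by omega
      have h2 : (k + d) + 1 < n := by omega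
      calc t k ≤ t (k + d) := ih k h1
        _ ≤ t (k + d + 1) := (hmono (k + d) h2).le
  have hmem : ∀ k, k < n → t k ∈ Icc 0 L := by
    intro k hk
    constructor
    · have := hstep k 0 (by omega)
      simpa [ht0] using this
    · rcases eq_or_lt_of_le (show k ≤ n - 1 by omega) with h | h
      · rw [h]; exact htn.le
      · have := hstep (n - 1 - k) k (by omega)
        rw [show k + (n - 1 - k) = n - 1 by omega] at this
        exact le_trans this htn.le
  -- constants
  set K : ℝ := 2 * CB * Mb with hKdef
  have hK0 : 0 ≤ K := by positivity
  set ε₀ : ℝ := c' / (2 * ((n : ℝ) * K + 1)) with hε₀def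
  have hε₀pos : 0 < ε₀ := by positivity
  obtain ⟨δ₀, hδ₀pos, hδ₀⟩ := hmod ε₀ hε₀pos
  have hrne : (Finset.range n).Nonempty := ⟨0, Finset.mem_range.mpr hn⟩
  set m : ℝ := (Finset.range n).inf' hrne
    (fun k => (if k + 1 < n then t (k + 1) else L) - t k) with hmdef
  have hm : 0 < m := by
    rw [hmdef, Finset.lt_inf'_iff]
    intro k hk
    rw [Finset.mem_range] at hk
    split_ifs with h
    · exact sub_pos.mpr (hmono k h)
    · have hk' : k = n - 1 := by omega
      rw [hk']
      exact sub_pos.mpr htn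
  set δ : ℝ := min δ₀ m with hδdef
  have hδpos : 0 < δ := lt_min hδ₀pos hm
  have hδδ₀ : δ ≤ δ₀ := min_le_left _ _
  have hgap : ∀ k, k < n → t k + δ ≤ (if k + 1 < n then t (k + 1) else L) := by
    intro k hk
    have := Finset.inf'_le (fun k => (if k + 1 < n then t (k + 1) else L) - t k)
      (Finset.mem_range.mpr hk)
    have h2 : δ ≤ m := min_le_right _ _
    have := le_trans h2 this
    linarith
  have hmem2 : ∀ k, k < n → t k + δ ∈ Icc 0 L := by
    intro k hk
    have h1 := hgap k hk
    constructor
    · have := (hmem k hk).1; linarith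
    · split_ifs at h1 with h
      · exact le_trans h1 (hmem (k + 1) h).2
      · exact h1
  have hnKε : (n : ℝ) * K * ε₀ ≤ c' / 2 := by
    have h1 : (0:ℝ) < 2 * ((n : ℝ) * K + 1) := by positivity
    have h2 : ε₀ * (2 * ((n : ℝ) * K + 1)) = c' := by
      rw [hε₀def]; field_simp
    nlinarith
  refine ⟨δ * c' / 2, max (δ * c' / 2) (L * (CB * Mb ^ 2)), by positivity,
    le_max_left _ _, fun f => ?_⟩
  obtain ⟨hsumm, hswap⟩ := swap_lemma hG hCB hCB0 hMb0 hMb hTc hL.le f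
  set Ψ : ℝ → ℝ := fun s => ∑' i, ‖⟪f, T s (g i)⟫_ℂ‖ ^ 2 with hΨdef
  have hΨnn : ∀ s, 0 ≤ Ψ s := fun s => tsum_nonneg fun i => sq_nonneg _
  have hΨint : ∀ a b, a ∈ Icc 0 L → b ∈ Icc 0 L →
      IntervalIntegrable Ψ MeasureTheory.volume a b := fun a b ha hb =>
    Psi_intervalIntegrable hG hCB hCB0 hMb0 hMb hTc hL.le f ha hb
  have h0L : (0:ℝ) ∈ Icc (0:ℝ) L := ⟨le_refl _, hL.le⟩
  have hLL : L ∈ Icc (0:ℝ) L := ⟨hL.le, le_refl _⟩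
  -- pointwise lower bound near sample points
  have hlow1 : ∀ k, k < n → ∀ s ∈ Icc (t k) (t k + δ), Ψ (t k) - K * ε₀ * ‖f‖ ^ 2 ≤ Ψ s := by
    intro k hk s hs
    have hsmem : s ∈ Icc 0 L := by
      constructor
      · exact le_trans (hmem k hk).1 hs.1
      · exact le_trans hs.2 (hmem2 k hk).2
    have hTd : ‖T s - T (t k)‖ ≤ ε₀ := by
      apply hδ₀ s hsmem (t k) (hmem k hk)
      rw [abs_le]
      constructor
      · linarith [hs.1, hδ₀pos]
      · linarith [hs.2, hδδ₀]
    have hpd := phi_diff hG hCB hCB0 (hMb s hsmem) (hMb (t k) (hmem k hk)) f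
    have h1 : 2 * CB * Mb * ‖T s - T (t k)‖ * ‖f‖ ^ 2 ≤ K * ε₀ * ‖f‖ ^ 2 := by
      rw [hKdef]
      have : 2 * CB * Mb * ‖T s - T (t k)‖ ≤ 2 * CB * Mb * ε₀ :=
        mul_le_mul_of_nonneg_left hTd (by positivity)
      nlinarith [sq_nonneg ‖f‖]
    have := abs_le.mp hpd
    have h2 : Ψ s - Ψ (t k) ≥ -(K * ε₀ * ‖f‖ ^ 2) := by
      have hx := this.1
      simp only [hΨdef]
      nlinarith
    linarith
  -- integral lower bound on each small interval
  have hint1 : ∀ k, k < n → δ * (Ψ (t k) - K * ε₀ * ‖f‖ ^ 2)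
      ≤ ∫ s in (t k)..(t k + δ), Ψ s := by
    intro k hk
    have hab : t k ≤ t k + δ := by linarith
    have := intervalIntegral.integral_mono_on (μ := MeasureTheory.volume) hab
      (intervalIntegrable_const (c := Ψ (t k) - K * ε₀ * ‖f‖ ^ 2))
      (hΨint _ _ (hmem k hk) (hmem2 k hk)) (hlow1 k hk)
    rw [intervalIntegral.integral_const, smul_eq_mul] at this
    calc δ * (Ψ (t k) - K * ε₀ * ‖f‖ ^ 2)
        = (t k + δ - t k) * (Ψ (t k) - K * ε₀ * ‖f‖ ^ 2) := by ring_nf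
      _ ≤ _ := this
  -- chain of intervals
  have hchain : ∀ M, 1 ≤ M → M ≤ n →
      (∑ k ∈ Finset.range M, ∫ s in (t k)..(t k + δ), Ψ s)
        ≤ ∫ s in (0:ℝ)..(t (M - 1) + δ), Ψ s := by
    intro M
    induction M with
    | zero => intro h; omega
    | succ M ih =>
      intro _ hMn
      rcases Nat.eq_zero_or_pos M with rfl | hM1
      · norm_num [Finset.sum_range_one, ht0]
      · have hMn' : M < n := by omega
        have hMm1 : M - 1 < n := by omega
        have hgM : t (M - 1) + δ ≤ t M := by
          have := hgap (M - 1) hMm1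
          rw [if_pos (show (M - 1) + 1 < n by omega)] at this
          rw [show M - 1 + 1 = M by omega] at this
          exact this
        have hintA : IntervalIntegrable Ψ MeasureTheory.volume 0 (t (M - 1) + δ) :=
          hΨint _ _ h0L (hmem2 (M - 1) hMm1)
        have hintB : IntervalIntegrable Ψ MeasureTheory.volume (t (M - 1) + δ) (t M) := by
          apply (hΨint _ _ (hmem2 (M - 1) hMm1) (hmem M hMn'))
        have hintC : IntervalIntegrable Ψ MeasureTheory.volume (t M) (t M + δ) :=
          hΨint _ _ (hmem M hMn') (hmem2 M hMn')
        have hintAB : IntervalIntegrable Ψ MeasureTheory.volume 0 (t M) :=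
          hΨint _ _ h0L (hmem M hMn')
        have hmid : 0 ≤ ∫ s in (t (M - 1) + δ)..(t M), Ψ s :=
          intervalIntegral.integral_nonneg hgM (fun s _ => hΨnn s)
        have hsplit1 : (∫ s in (0:ℝ)..(t (M - 1) + δ), Ψ s)
            + ∫ s in (t (M - 1) + δ)..(t M), Ψ s = ∫ s in (0:ℝ)..(t M), Ψ s :=
          intervalIntegral.integral_add_adjacent_intervals hintA hintB
        have hsplit2 : (∫ s in (0:ℝ)..(t M), Ψ s) + ∫ s in (t M)..(t M + δ), Ψ s
            = ∫ s in (0:ℝ)..(t M + δ), Ψ s :=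
          intervalIntegral.integral_add_adjacent_intervals hintAB hintC
        rw [Finset.sum_range_succ, Nat.succ_sub_one]
        have hih := ih hM1 (by omega)
        have : t (M + 1 - 1) = t M := by norm_num
        linarith [hih]
  have hchain' := hchain n hn le_rfl
  have hlastle : t (n - 1) + δ ≤ L := by
    have := hgap (n - 1) (by omega)
    rw [if_neg (show ¬((n - 1) + 1 < n) by omega)] at this
    exact this
  have hfin1 : (∫ s in (0:ℝ)..(t (n - 1) + δ), Ψ s) ≤ ∫ s in (0:ℝ)..L, Ψ s := by
    have hintA : IntervalIntegrable Ψ MeasureTheory.volume 0 (t (n - 1) + δ) :=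
      hΨint _ _ h0L (hmem2 (n - 1) (by omega))
    have hintB : IntervalIntegrable Ψ MeasureTheory.volume (t (n - 1) + δ) L :=
      hΨint _ _ (hmem2 (n - 1) (by omega)) hLL
    have hmid : 0 ≤ ∫ s in (t (n - 1) + δ)..L, Ψ s :=
      intervalIntegral.integral_nonneg hlastle (fun s _ => hΨnn s)
    have hsplit : (∫ s in (0:ℝ)..(t (n - 1) + δ), Ψ s)
        + ∫ s in (t (n - 1) + δ)..L, Ψ s = ∫ s in (0:ℝ)..L, Ψ s :=
      intervalIntegral.integral_add_adjacent_intervals hintA hintB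
    linarith
  have hsum_lower : ∑ k ∈ Finset.range n, δ * (Ψ (t k) - K * ε₀ * ‖f‖ ^ 2)
      ≤ ∫ s in (0:ℝ)..L, Ψ s := by
    refine le_trans (Finset.sum_le_sum fun k hk => hint1 k (Finset.mem_range.mp hk)) ?_
    exact le_trans hchain' hfin1
  have hsum_eq : ∑ k ∈ Finset.range n, δ * (Ψ (t k) - K * ε₀ * ‖f‖ ^ 2)
      = δ * (∑ k ∈ Finset.range n, Ψ (t k)) - (n : ℝ) * (δ * (K * ε₀ * ‖f‖ ^ 2)) := by
    have hterm : ∀ k, δ * (Ψ (t k) - K * ε₀ * ‖f‖ ^ 2)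
        = δ * Ψ (t k) - δ * (K * ε₀ * ‖f‖ ^ 2) := fun k => by ring
    rw [Finset.sum_congr rfl (fun k _ => hterm k), Finset.sum_sub_distrib,
      Finset.sum_const, Finset.card_range, ← Finset.mul_sum, nsmul_eq_mul]
  have hdisc : c' * ‖f‖ ^ 2 ≤ ∑ k ∈ Finset.range n, Ψ (t k) := by
    have h := hlow f
    rw [Summable.tsum_finsetSum (fun k _ => summable_inner_op hG (T (t k)) f)] at h
    exact h
  have herr : (n : ℝ) * (δ * (K * ε₀ * ‖f‖ ^ 2)) ≤ δ * (c' / 2) * ‖f‖ ^ 2 := by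
    have h1 : (n : ℝ) * K * ε₀ * (δ * ‖f‖ ^ 2) ≤ (c' / 2) * (δ * ‖f‖ ^ 2) := by
      apply mul_le_mul_of_nonneg_right hnKε (by positivity)
    nlinarith [sq_nonneg ‖f‖]
  constructor
  · rw [hswap]
    have h1 : δ * (∑ k ∈ Finset.range n, Ψ (t k))
        - (n : ℝ) * (δ * (K * ε₀ * ‖f‖ ^ 2)) ≤ ∫ s in (0:ℝ)..L, Ψ s := by
      rw [← hsum_eq]; exact hsum_lower
    have hδd : δ * (c' * ‖f‖ ^ 2) ≤ δ * (∑ k ∈ Finset.range n, Ψ (t k)) :=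
      mul_le_mul_of_nonneg_left hdisc hδpos.le
    have hring : δ * (c' * ‖f‖ ^ 2) - δ * (c' / 2) * ‖f‖ ^ 2 = δ * c' / 2 * ‖f‖ ^ 2 := by
      ring
    linarith [h1, hδd, herr, hring]
  · rw [hswap]
    have hptU : ∀ s ∈ Icc (0:ℝ) L, Ψ s ≤ CB * (Mb * ‖f‖) ^ 2 := by
      intro s hs
      refine le_trans (tsum_inner_op_le hCB hCB0 (T s) f) ?_
      apply mul_le_mul_of_nonneg_left _ hCB0
      apply pow_le_pow_left₀ (by positivity)
      exact mul_le_mul_of_nonneg_right (hMb s hs) (norm_nonneg _)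
    have := intervalIntegral.integral_mono_on (μ := MeasureTheory.volume) hL.le
      (hΨint 0 L h0L hLL) (intervalIntegrable_const (c := CB * (Mb * ‖f‖) ^ 2)) hptU
    rw [intervalIntegral.integral_const, smul_eq_mul] at this
    calc (∫ s in (0:ℝ)..L, Ψ s) ≤ (L - 0) * (CB * (Mb * ‖f‖) ^ 2) := this
      _ = (L * (CB * Mb ^ 2)) * ‖f‖ ^ 2 := by ring
      _ ≤ max (δ * c' / 2) (L * (CB * Mb ^ 2)) * ‖f‖ ^ 2 :=
          mul_le_mul_of_nonneg_right (le_max_right _ _) (sq_nonneg _)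


lemma discrete_of_continuous [Countable I]
    (hG : ∀ h : H, Summable fun i => ‖⟪h, g i⟫_ℂ‖ ^ 2)
    (hCB : ∀ h : H, ∑' i, ‖⟪h, g i⟫_ℂ‖ ^ 2 ≤ CB * ‖h‖ ^ 2) (hCB0 : 0 ≤ CB)
    {Mb : ℝ} (hMb0 : 0 ≤ Mb) (hMb : ∀ s ∈ Icc 0 L, ‖T s‖ ≤ Mb)
    (hTc : ContinuousOn T (Icc 0 L))
    (hmod : ∀ ε > (0:ℝ), ∃ δ > (0:ℝ), ∀ s ∈ Icc 0 L, ∀ u ∈ Icc 0 L,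
      |s - u| ≤ δ → ‖T s - T u‖ ≤ ε)
    (hL : 0 < L) {c : ℝ} (hc : 0 < c)
    (hlow : ∀ f : H, c * ‖f‖ ^ 2 ≤ ∑' i, ∫ s in (0:ℝ)..L, ‖⟪f, T s (g i)⟫_ℂ‖ ^ 2) :
    ∃ (n : ℕ) (t : ℕ → ℝ), 1 ≤ n ∧ t 0 = 0 ∧
      (∀ k : ℕ, k + 1 < n → t k < t (k + 1)) ∧ t (n - 1) < L ∧
      ∃ c' C' : ℝ, 0 < c' ∧ c' ≤ C' ∧ ∀ f : H,
        c' * ‖f‖ ^ 2 ≤ (∑' i, ∑ k ∈ Finset.range n, ‖⟪f, T (t k) (g i)⟫_ℂ‖ ^ 2) ∧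
        (∑' i, ∑ k ∈ Finset.range n, ‖⟪f, T (t k) (g i)⟫_ℂ‖ ^ 2) ≤ C' * ‖f‖ ^ 2 := by
  set K : ℝ := 2 * CB * Mb with hKdef
  have hK0 : 0 ≤ K := by positivity
  set ε₀ : ℝ := c / (2 * (L * K + 1)) with hε₀def
  have hLK0 : 0 ≤ L * K := by positivity
  have hε₀pos : 0 < ε₀ := by
    apply div_pos hc
    nlinarith
  obtain ⟨δ₀, hδ₀pos, hδ₀⟩ := hmod ε₀ hε₀pos
  set n : ℕ := max 1 ⌈L / δ₀⌉₊ with hndef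
  have hn : 1 ≤ n := le_max_left _ _
  have hnpos : (0:ℝ) < (n : ℝ) := by
    have : (1:ℝ) ≤ (n:ℝ) := by exact_mod_cast hn
    linarith
  set Δ : ℝ := L / (n : ℝ) with hΔdef
  have hΔpos : 0 < Δ := div_pos hL hnpos
  have hnΔ : (n : ℝ) * Δ = L := by
    rw [hΔdef]; field_simp
  have hΔδ₀ : Δ ≤ δ₀ := by
    have h1 : L / δ₀ ≤ (n : ℝ) :=
      le_trans (Nat.le_ceil _) (Nat.cast_le.mpr (le_max_right _ _))
    have h2 : L ≤ (n : ℝ) * δ₀ := (div_le_iff₀ hδ₀pos).mp h1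
    rw [hΔdef, div_le_iff₀ hnpos]
    linarith
  set t : ℕ → ℝ := fun k => (k : ℝ) * Δ with htdef
  have hmemk : ∀ k, k ≤ n → t k ∈ Icc 0 L := by
    intro k hk
    constructor
    · positivity
    · rw [← hnΔ]
      exact mul_le_mul_of_nonneg_right (Nat.cast_le.mpr hk) hΔpos.le
  have htstep : ∀ k, t (k + 1) - t k = Δ := by
    intro k
    rw [htdef]
    push_cast
    ring
  have hLKε : L * K * ε₀ ≤ c / 2 := by
    have h2 : ε₀ * (2 * (L * K + 1)) = c := by
      rw [hε₀def]; field_simp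
    nlinarith
  refine ⟨n, t, hn, by simp [htdef], ?_, ?_, c / (2 * Δ),
    max (c / (2 * Δ)) ((n : ℝ) * (CB * Mb ^ 2)), by positivity, le_max_left _ _, ?_⟩
  · intro k _
    have : (k : ℝ) < (k : ℝ) + 1 := by linarith
    rw [htdef]
    push_cast
    nlinarith
  · have h1 : ((n - 1 : ℕ) : ℝ) < (n : ℝ) := by
      have : n - 1 < n := by omega
      exact_mod_cast this
    calc t (n - 1) = ((n - 1 : ℕ) : ℝ) * Δ := rfl
      _ < (n : ℝ) * Δ := by nlinarith
      _ = L := hnΔ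
  intro f
  obtain ⟨hsumm, hswap⟩ := swap_lemma hG hCB hCB0 hMb0 hMb hTc hL.le f
  set Ψ : ℝ → ℝ := fun s => ∑' i, ‖⟪f, T s (g i)⟫_ℂ‖ ^ 2 with hΨdef
  have hΨnn : ∀ s, 0 ≤ Ψ s := fun s => tsum_nonneg fun i => sq_nonneg _
  have hΨint : ∀ a b, a ∈ Icc 0 L → b ∈ Icc 0 L →
      IntervalIntegrable Ψ MeasureTheory.volume a b := fun a b ha hb =>
    Psi_intervalIntegrable hG hCB hCB0 hMb0 hMb hTc hL.le f ha hb
  have hconv : (∑' i, ∑ k ∈ Finset.range n, ‖⟪f, T (t k) (g i)⟫_ℂ‖ ^ 2)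
      = ∑ k ∈ Finset.range n, Ψ (t k) :=
    Summable.tsum_finsetSum (fun k _ => summable_inner_op hG (T (t k)) f)
  have hadj : (∑ k ∈ Finset.range n, ∫ s in (t k)..(t (k + 1)), Ψ s)
      = ∫ s in (t 0)..(t n), Ψ s :=
    intervalIntegral.sum_integral_adjacent_intervals
      (fun k hk => hΨint (t k) (t (k + 1)) (hmemk k (by omega)) (hmemk (k + 1) (by omega)))
  have ht0eq : t 0 = 0 := by simp [htdef]
  have htneq : t n = L := by rw [htdef]; exact hnΔ
  have hpiece : ∀ k, k < n →
      (∫ s in (t k)..(t (k + 1)), Ψ s) ≤ Δ * (Ψ (t k) + K * ε₀ * ‖f‖ ^ 2) := by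
    intro k hk
    have hk1 : t k ≤ t (k + 1) := by
      have := htstep k
      linarith
    have hptU : ∀ s ∈ Icc (t k) (t (k + 1)), Ψ s ≤ Ψ (t k) + K * ε₀ * ‖f‖ ^ 2 := by
      intro s hs
      have hsmem : s ∈ Icc 0 L := by
        constructor
        · exact le_trans (hmemk k (by omega)).1 hs.1
        · exact le_trans hs.2 (hmemk (k + 1) (by omega)).2
      have hTd : ‖T s - T (t k)‖ ≤ ε₀ := by
        apply hδ₀ s hsmem (t k) (hmemk k (by omega))
        rw [abs_le]
        have := htstep k
        constructor
        · linarith [hs.1, hδ₀pos]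
        · linarith [hs.2, hΔδ₀]
      have hpd := phi_diff hG hCB hCB0 (hMb s hsmem) (hMb (t k) (hmemk k (by omega))) f
      have h1 : 2 * CB * Mb * ‖T s - T (t k)‖ * ‖f‖ ^ 2 ≤ K * ε₀ * ‖f‖ ^ 2 := by
        rw [hKdef]
        have : 2 * CB * Mb * ‖T s - T (t k)‖ ≤ 2 * CB * Mb * ε₀ :=
          mul_le_mul_of_nonneg_left hTd (by positivity)
        nlinarith [sq_nonneg ‖f‖]
      have h2 := (abs_le.mp hpd).2
      simp only [hΨdef]
      linarith
    have := intervalIntegral.integral_mono_on (μ := MeasureTheory.volume) hk1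
      (hΨint _ _ (hmemk k (by omega)) (hmemk (k + 1) (by omega)))
      (intervalIntegrable_const (c := Ψ (t k) + K * ε₀ * ‖f‖ ^ 2)) hptU
    rw [intervalIntegral.integral_const, smul_eq_mul, htstep k] at this
    exact this
  have hsum_upper : (∫ s in (0:ℝ)..L, Ψ s)
      ≤ Δ * (∑ k ∈ Finset.range n, Ψ (t k)) + L * K * ε₀ * ‖f‖ ^ 2 := by
    have h1 : (∫ s in (0:ℝ)..L, Ψ s)
        = ∑ k ∈ Finset.range n, ∫ s in (t k)..(t (k + 1)), Ψ s := by
      rw [hadj, ht0eq, htneq]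
    rw [h1]
    have h2 : (∑ k ∈ Finset.range n, ∫ s in (t k)..(t (k + 1)), Ψ s)
        ≤ ∑ k ∈ Finset.range n, Δ * (Ψ (t k) + K * ε₀ * ‖f‖ ^ 2) :=
      Finset.sum_le_sum fun k hk => hpiece k (Finset.mem_range.mp hk)
    refine le_trans h2 ?_
    have h3 : ∑ k ∈ Finset.range n, Δ * (Ψ (t k) + K * ε₀ * ‖f‖ ^ 2)
        = Δ * (∑ k ∈ Finset.range n, Ψ (t k)) + (n : ℝ) * (Δ * (K * ε₀ * ‖f‖ ^ 2)) := by
      have hterm : ∀ k, Δ * (Ψ (t k) + K * ε₀ * ‖f‖ ^ 2)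
          = Δ * Ψ (t k) + Δ * (K * ε₀ * ‖f‖ ^ 2) := fun k => by ring
      rw [Finset.sum_congr rfl (fun k _ => hterm k), Finset.sum_add_distrib,
        Finset.sum_const, Finset.card_range, ← Finset.mul_sum, nsmul_eq_mul]
    rw [h3]
    have h4 : (n : ℝ) * (Δ * (K * ε₀ * ‖f‖ ^ 2)) = L * K * ε₀ * ‖f‖ ^ 2 := by
      rw [← hnΔ]; ring
    rw [h4]
  have hlowf : c * ‖f‖ ^ 2 ≤ ∫ s in (0:ℝ)..L, Ψ s := by
    rw [← hswap]; exact hlow f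
  constructor
  · rw [hconv]
    have herr : L * K * ε₀ * ‖f‖ ^ 2 ≤ (c / 2) * ‖f‖ ^ 2 :=
      mul_le_mul_of_nonneg_right hLKε (sq_nonneg _)
    have h5 : (c / 2) * ‖f‖ ^ 2 ≤ Δ * (∑ k ∈ Finset.range n, Ψ (t k)) := by
      linarith
    have h6 : Δ * (c / (2 * Δ) * ‖f‖ ^ 2) = (c / 2) * ‖f‖ ^ 2 := by
      field_simp
    rw [← h6] at h5
    exact le_of_mul_le_mul_left h5 hΔpos
  · rw [hconv]
    have hptU : ∀ k ∈ Finset.range n, Ψ (t k) ≤ CB * Mb ^ 2 * ‖f‖ ^ 2 := by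
      intro k hk
      refine le_trans (tsum_inner_op_le hCB hCB0 (T (t k)) f) ?_
      have h7 : ‖T (t k)‖ ≤ Mb := hMb (t k) (hmemk k (Finset.mem_range.mp hk).le)
      have : (‖T (t k)‖ * ‖f‖) ^ 2 ≤ (Mb * ‖f‖) ^ 2 := by
        apply pow_le_pow_left₀ (by positivity)
        exact mul_le_mul_of_nonneg_right h7 (norm_nonneg _)
      calc CB * (‖T (t k)‖ * ‖f‖) ^ 2 ≤ CB * (Mb * ‖f‖) ^ 2 :=
            mul_le_mul_of_nonneg_left this hCB0
        _ = CB * Mb ^ 2 * ‖f‖ ^ 2 := by ring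
    calc (∑ k ∈ Finset.range n, Ψ (t k)) ≤ ∑ k ∈ Finset.range n, CB * Mb ^ 2 * ‖f‖ ^ 2 :=
          Finset.sum_le_sum hptU
      _ = (n : ℝ) * (CB * Mb ^ 2) * ‖f‖ ^ 2 := by
          rw [Finset.sum_const, Finset.card_range, nsmul_eq_mul]; ring
      _ ≤ max (c / (2 * Δ)) ((n : ℝ) * (CB * Mb ^ 2)) * ‖f‖ ^ 2 :=
          mul_le_mul_of_nonneg_right (le_max_right _ _) (sq_nonneg _)


lemma bridge [Countable I]
    (hCB : ∀ h : H, ∑' i, ‖⟪h, g i⟫_ℂ‖ ^ 2 ≤ CB * ‖h‖ ^ 2) (hCB0 : 0 ≤ CB)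
    {Mb : ℝ} (hMb0 : 0 ≤ Mb) (hMb : ∀ s ∈ Icc 0 L, ‖T s‖ ≤ Mb)
    (hT0 : T 0 = 1) (hTc : ContinuousOn T (Icc 0 L))
    (hmod : ∀ ε > (0:ℝ), ∃ δ > (0:ℝ), ∀ s ∈ Icc 0 L, ∀ u ∈ Icc 0 L,
      |s - u| ≤ δ → ‖T s - T u‖ ≤ ε)
    (hL : 0 < L) :
    (∃ c C : ℝ, 0 < c ∧ c ≤ C ∧ ∀ f : H,
      c * ‖f‖ ^ 2 ≤ (∑' i, ∫ s in (0:ℝ)..L, ‖⟪f, T s (g i)⟫_ℂ‖ ^ 2) ∧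
      (∑' i, ∫ s in (0:ℝ)..L, ‖⟪f, T s (g i)⟫_ℂ‖ ^ 2) ≤ C * ‖f‖ ^ 2)
      ↔
    (∃ (n : ℕ) (t : ℕ → ℝ), 1 ≤ n ∧ t 0 = 0 ∧
      (∀ k : ℕ, k + 1 < n → t k < t (k + 1)) ∧ t (n - 1) < L ∧
      ∃ c' C' : ℝ, 0 < c' ∧ c' ≤ C' ∧ ∀ f : H,
        c' * ‖f‖ ^ 2 ≤ (∑' i, ∑ k ∈ Finset.range n, ‖⟪f, T (t k) (g i)⟫_ℂ‖ ^ 2) ∧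
        (∑' i, ∑ k ∈ Finset.range n, ‖⟪f, T (t k) (g i)⟫_ℂ‖ ^ 2) ≤ C' * ‖f‖ ^ 2) := by
  constructor
  · rintro ⟨c, C, hc, hcC, hbd⟩
    have hlow : ∀ f : H, c * ‖f‖ ^ 2
        ≤ ∑' i, ∫ s in (0:ℝ)..L, ‖⟪f, T s (g i)⟫_ℂ‖ ^ 2 := fun f => (hbd f).1
    have hG : ∀ h : H, Summable fun i => ‖⟪h, g i⟫_ℂ‖ ^ 2 :=
      hsum_of_continuous hCB hCB0 hMb0 hMb hT0 hTc hL hc hlow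
    exact discrete_of_continuous hG hCB hCB0 hMb0 hMb hTc hmod hL hc hlow
  · rintro ⟨n, t, hn, ht0', hmono, htn, c', C', hc', hcC', hbd⟩
    have hlow : ∀ f : H, c' * ‖f‖ ^ 2
        ≤ ∑' i, ∑ k ∈ Finset.range n, ‖⟪f, T (t k) (g i)⟫_ℂ‖ ^ 2 := fun f => (hbd f).1
    have hG : ∀ h : H, Summable fun i => ‖⟪h, g i⟫_ℂ‖ ^ 2 :=
      hsum_of_discrete hT0 hn ht0' hc' hlow
    exact continuous_of_discrete hG hCB hCB0 hMb0 hMb hTc hmod hL hn ht0' hmono htn hc' hlow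

end Tlayer

end SemicontFrameAux


open scoped InnerProductSpace

set_option maxHeartbeats 1000000 in
/-- For an invertible bounded normal operator `A` (spectrum containing no negative real
number) and a Bessel family `(gᵢ)`, the system `{A^t gᵢ : i ∈ I, t ∈ [0,L]}` is a
semi-continuous frame for `H` if and only if some finite time set
`0 = t₁ < t₂ < ⋯ < t_n < L` yields a discrete frame `{A^{t_k} gᵢ}`.
(Times are indexed here by `0, …, n-1`.) -/
theorem semicontinuous_frame_iff_exists_discrete_frame
    {H : Type*} [NormedAddCommGroup H] [InnerProductSpace ℂ H] [CompleteSpace H]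
    (A : H →L[ℂ] H) (hA : IsStarNormal A) (hinv : IsUnit A)
    (hspec : ∀ z ∈ spectrum ℂ A, 0 ≤ z.re ∨ z.im ≠ 0)
    {I : Type*} [Countable I] (g : I → H)
    (hbessel : ∃ CB : ℝ, 0 < CB ∧ ∀ f : H, ∑' i : I, ‖⟪f, g i⟫_ℂ‖ ^ 2 ≤ CB * ‖f‖ ^ 2)
    (L : ℝ) (hL : 0 < L) :
    (∃ c C : ℝ, 0 < c ∧ c ≤ C ∧ ∀ f : H,
      c * ‖f‖ ^ 2 ≤
          ∑' i : I, ∫ t in (0 : ℝ)..L, ‖⟪f, (cfc (fun z : ℂ => z ^ (t : ℂ)) A) (g i)⟫_ℂ‖ ^ 2 ∧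
      ∑' i : I, ∫ t in (0 : ℝ)..L, ‖⟪f, (cfc (fun z : ℂ => z ^ (t : ℂ)) A) (g i)⟫_ℂ‖ ^ 2
          ≤ C * ‖f‖ ^ 2)
      ↔
    (∃ (n : ℕ) (t : ℕ → ℝ), 1 ≤ n ∧ t 0 = 0 ∧
      (∀ k : ℕ, k + 1 < n → t k < t (k + 1)) ∧ t (n - 1) < L ∧
      ∃ c' C' : ℝ, 0 < c' ∧ c' ≤ C' ∧ ∀ f : H,
        c' * ‖f‖ ^ 2 ≤
            ∑' i : I, ∑ k ∈ Finset.range n,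
              ‖⟪f, (cfc (fun z : ℂ => z ^ ((t k : ℝ) : ℂ)) A) (g i)⟫_ℂ‖ ^ 2 ∧
        ∑' i : I, ∑ k ∈ Finset.range n,
            ‖⟪f, (cfc (fun z : ℂ => z ^ ((t k : ℝ) : ℂ)) A) (g i)⟫_ℂ‖ ^ 2 ≤ C' * ‖f‖ ^ 2) := by
  haveI := hA
  obtain ⟨CB, hCB0, hCB⟩ := hbessel
  have hsl : ∀ z ∈ spectrum ℂ A, z ∈ Complex.slitPlane := by
    intro z hz
    have hz0 : z ≠ 0 := by
      rintro rfl; exact spectrum.zero_notMem ℂ hinv hz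
    rw [Complex.mem_slitPlane_iff]
    rcases hspec z hz with h | h
    · rcases h.lt_or_eq with h' | h'
      · exact Or.inl h'
      · right
        intro him
        exact hz0 (Complex.ext (by simp [← h']) (by simp [him]))
    · exact Or.inr h
  have hcont : ∀ s : ℝ, ContinuousOn (fun z : ℂ => z ^ ((s : ℝ) : ℂ)) (spectrum ℂ A) :=
    fun s z hz => (continuousAt_cpow_const (hsl z hz)).continuousWithinAt
  have hT0 : cfc (fun z : ℂ => z ^ (((0 : ℝ) : ℝ) : ℂ)) A = 1 := by
    rw [show (fun z : ℂ => z ^ (((0 : ℝ) : ℝ) : ℂ)) = (fun _ : ℂ => (1 : ℂ)) by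
      funext z; simp]
    exact cfc_const_one ℂ A
  have hKcpt : IsCompact ((Set.Icc (0:ℝ) L) ×ˢ spectrum ℂ A) :=
    isCompact_Icc.prod (spectrum.isCompact A)
  have hFc : ContinuousOn (fun p : ℝ × ℂ => p.2 ^ ((p.1 : ℝ) : ℂ))
      ((Set.Icc (0:ℝ) L) ×ˢ spectrum ℂ A) := by
    intro p hp
    have hm : Continuous (fun q : ℝ × ℂ => (q.2, ((q.1 : ℝ) : ℂ))) :=
      continuous_snd.prodMk (Complex.continuous_ofReal.comp continuous_fst)
    have h0 : ContinuousAt (fun x : ℂ × ℂ => x.1 ^ x.2) (p.2, ((p.1 : ℝ) : ℂ)) :=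
      continuousAt_cpow (hsl p.2 hp.2)
    exact (ContinuousAt.comp (x := p) h0 hm.continuousAt).continuousWithinAt
  have hmod : ∀ ε > (0:ℝ), ∃ δ > (0:ℝ), ∀ s ∈ Set.Icc (0:ℝ) L, ∀ u ∈ Set.Icc (0:ℝ) L,
      |s - u| ≤ δ →
        ‖cfc (fun z : ℂ => z ^ ((s : ℝ) : ℂ)) A - cfc (fun z : ℂ => z ^ ((u : ℝ) : ℂ)) A‖
          ≤ ε := by
    intro ε hε
    have hUC := hKcpt.uniformContinuousOn_of_continuous hFc
    rw [Metric.uniformContinuousOn_iff_le] at hUC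
    obtain ⟨δ, hδpos, hδ⟩ := hUC ε hε
    refine ⟨δ, hδpos, fun s hs u hu hsu => ?_⟩
    have hzpt : ∀ z ∈ spectrum ℂ A, ‖z ^ ((s:ℝ):ℂ) - z ^ ((u:ℝ):ℂ)‖ ≤ ε := by
      intro z hz
      have hd : dist ((s, z) : ℝ × ℂ) ((u, z) : ℝ × ℂ) ≤ δ := by
        rw [Prod.dist_eq]
        simp only [dist_self]
        rw [Real.dist_eq]
        exact max_le hsu hδpos.le
      have := hδ (s, z) ⟨hs, hz⟩ (u, z) ⟨hu, hz⟩ hd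
      rw [dist_eq_norm] at this
      exact this
    rw [← cfc_sub (fun z : ℂ => z ^ ((s:ℝ):ℂ)) (fun z : ℂ => z ^ ((u:ℝ):ℂ)) A
      (hcont s) (hcont u)]
    exact norm_cfc_le hε.le hzpt
  have hTc : ContinuousOn (fun s : ℝ => cfc (fun z : ℂ => z ^ ((s : ℝ) : ℂ)) A)
      (Set.Icc (0:ℝ) L) := by
    intro t0 ht0
    rw [Metric.continuousWithinAt_iff]
    intro ε hε
    obtain ⟨δ, hδpos, hδ⟩ := hmod (ε / 2) (by positivity)
    refine ⟨δ, hδpos, fun {s} hs hds => ?_⟩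
    have h1 := hδ s hs t0 ht0 (by rw [← Real.dist_eq]; exact hds.le)
    rw [dist_eq_norm]
    calc ‖_ - _‖ ≤ ε / 2 := h1
      _ < ε := by linarith
  obtain ⟨C0, hC0⟩ := hKcpt.exists_bound_of_continuousOn hFc
  have hMb0 : (0:ℝ) ≤ max C0 0 := le_max_right _ _
  have hMb : ∀ s ∈ Set.Icc (0:ℝ) L, ‖cfc (fun z : ℂ => z ^ ((s : ℝ) : ℂ)) A‖ ≤ max C0 0 := by
    intro s hs
    apply norm_cfc_le hMb0
    intro z hz
    exact le_trans (hC0 (s, z) ⟨hs, hz⟩) (le_max_left _ _)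
  exact SemicontFrameAux.bridge (T := fun s : ℝ => cfc (fun z : ℂ => z ^ ((s : ℝ) : ℂ)) A)
    hCB hCB0.le hMb0 hMb hT0 hTc hmod hL
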